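/- Let γ ∈ (1/2,1) and let f : [0,1] → [0,1] be the Liverani–Saussol–Vaienti intermittency map f(x) = x(1 + 2^γ x^γ) for x ∈ [0,1/2] and f(x) = 2x − 1 for x ∈ (1/2,1]. Let Y = [1/2,1] with return time r(y) = inf{k ≥ 1 : f^k(y) ∈ Y} (finite for every y ∈ Y). Let φ : [0,1] → ℝ be Hölder continuous with φ(0) ≠ 0, with ergodic sums φ_ℓ = ∑_{i=0}^{ℓ-1} φ∘f^i, and define Φ*(y) = (max_{0≤ℓ'≤ℓ≤r(y)} (φ_{ℓ'}(y) − φ_ℓ(y))) ∧ (max_{0≤ℓ'≤ℓ≤r(y)} (φ_ℓ(y) − φ_{ℓ'}(y))). Then Φ* is bounded on Y: there exists a constant C > 0 (one may take C = (k+1)·sup|φ| for a suitable integer k depending only on f and φ) such that Φ*(y) ≤ C for every y ∈ Y. -/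

import Mathlib

/-- The Liverani–Saussol–Vaienti intermittency map with parameter `γ`:
`f(x) = x(1 + 2^γ x^γ)` for `x ∈ [0,1/2]` and `f(x) = 2x − 1` for `x ∈ (1/2,1]`. -/
noncomputable def lsv (γ : ℝ) (x : ℝ) : ℝ :=
  if x ≤ 1 / 2 then x * (1 + 2 ^ γ * x ^ γ) else 2 * x - 1

/-- Return time `r(x) = inf {k ≥ 1 : f^k(x) ∈ Y}` (with junk value `0` if there is no return). -/
noncomputable def returnTime {X : Type*} (f : X → X) (Y : Set X) (x : X) : ℕ :=
  sInf {k : ℕ | 1 ≤ k ∧ f^[k] x ∈ Y}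

/-- Ergodic sums `φ_ℓ = ∑_{i=0}^{ℓ-1} φ ∘ f^i`. -/
noncomputable def ergSum {X : Type*} (f : X → X) (φ : X → ℝ) (k : ℕ) (x : X) : ℝ :=
  ∑ i ∈ Finset.range k, φ (f^[i] x)

/-- `Φ*(y) = (max_{0≤ℓ'≤ℓ≤r(y)} (φ_{ℓ'}(y) − φ_ℓ(y))) ∧ (max_{0≤ℓ'≤ℓ≤r(y)} (φ_ℓ(y) − φ_{ℓ'}(y)))`. -/
noncomputable def excStar {X : Type*} (f : X → X) (Y : Set X) (φ : X → ℝ) (y : X) : ℝ :=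
  min
    ((Finset.range (returnTime f Y y + 1)).sup' Finset.nonempty_range_add_one fun ℓ =>
      (Finset.range (ℓ + 1)).sup' Finset.nonempty_range_add_one fun ℓ' =>
        ergSum f φ ℓ' y - ergSum f φ ℓ y)
    ((Finset.range (returnTime f Y y + 1)).sup' Finset.nonempty_range_add_one fun ℓ =>
      (Finset.range (ℓ + 1)).sup' Finset.nonempty_range_add_one fun ℓ' =>
        ergSum f φ ℓ y - ergSum f φ ℓ' y)

lemma lsv_mem (γ : ℝ) (hγ : 0 < γ) {x : ℝ} (hx : x ∈ Set.Icc (0:ℝ) 1) :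
    lsv γ x ∈ Set.Icc (0:ℝ) 1 := by
  obtain ⟨h0, h1⟩ := hx
  unfold lsv
  split_ifs with h
  · constructor
    · positivity
    · have hx2 : x ^ γ ≤ (1/2 : ℝ) ^ γ := Real.rpow_le_rpow h0 h hγ.le
      have h2 : (2:ℝ) ^ γ * (1/2 : ℝ) ^ γ = 1 := by
        rw [← Real.mul_rpow (by norm_num) (by norm_num)]
        norm_num
      have : x * (1 + 2 ^ γ * x ^ γ) ≤ (1/2) * (1 + 2 ^ γ * (1/2) ^ γ) := by
        apply mul_le_mul h _ (by positivity) (by norm_num)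
        have : (2:ℝ) ^ γ * x ^ γ ≤ 2 ^ γ * (1/2)^γ :=
          mul_le_mul_of_nonneg_left hx2 (by positivity)
        linarith
      rw [h2] at this
      linarith
  · push_neg at h
    constructor <;> [linarith; linarith]

/-- Core lemma: if φ(0) > 0, then backward excursions of ergodic sums
up to the return time are uniformly bounded. -/
lemma core (γ : ℝ) (hγ : 0 < γ)
    (φ : ℝ → ℝ) (η H : ℝ) (hη0 : 0 < η) (hH : 0 ≤ H)
    (hHolder : ∀ x ∈ Set.Icc (0 : ℝ) 1, ∀ y ∈ Set.Icc (0 : ℝ) 1,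
      |φ x - φ y| ≤ H * |x - y| ^ η)
    (hφ0 : 0 < φ 0) :
    ∃ C : ℝ, 0 < C ∧
      ∀ y ∈ Set.Icc (1 / 2 : ℝ) 1,
        ∀ ℓ ≤ returnTime (lsv γ) (Set.Icc (1 / 2 : ℝ) 1) y, ∀ ℓ' ≤ ℓ,
          ergSum (lsv γ) φ ℓ' y - ergSum (lsv γ) φ ℓ y ≤ C := by
  classical
  -- sup bound for |φ| on [0,1]
  set S : ℝ := |φ 0| + H + 1 with hSdef
  have hS : 0 < S := by positivity
  have hφbd : ∀ x ∈ Set.Icc (0:ℝ) 1, -S ≤ φ x := by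
    intro x hx
    have h := hHolder x hx 0 (by constructor <;> norm_num)
    have hxabs : |x - 0| ^ η ≤ 1 :=
      Real.rpow_le_one (abs_nonneg _) (by rw [sub_zero, abs_of_nonneg hx.1]; exact hx.2) hη0.le
    have h2 : |φ x - φ 0| ≤ H := by nlinarith
    have h3 := abs_sub_abs_le_abs_sub (φ x) (φ 0)
    have h4 := neg_abs_le (φ x)
    have h5 := abs_nonneg (φ 0)
    simp only [hSdef]
    linarith
  -- δ: neighborhood of 0 where φ ≥ φ0/2
  set δ : ℝ := min (1/2) ((φ 0 / (2*(H+1))) ^ (1/η)) with hδdef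
  have hbase : 0 < φ 0 / (2*(H+1)) := by positivity
  have hδ0 : 0 < δ := lt_min (by norm_num) (Real.rpow_pos_of_pos hbase _)
  have hδhalf : δ ≤ 1/2 := min_le_left _ _
  have hδη : H * δ ^ η ≤ φ 0 / 2 := by
    have h1 : δ ≤ (φ 0 / (2*(H+1))) ^ (1/η) := min_le_right _ _
    have h2 : δ ^ η ≤ ((φ 0 / (2*(H+1))) ^ (1/η)) ^ η :=
      Real.rpow_le_rpow hδ0.le h1 hη0.le
    have h3 : ((φ 0 / (2*(H+1))) ^ (1/η)) ^ η = φ 0 / (2*(H+1)) := by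
      rw [← Real.rpow_mul hbase.le, one_div_mul_cancel hη0.ne', Real.rpow_one]
    rw [h3] at h2
    have h4 : H * δ ^ η ≤ H * (φ 0 / (2*(H+1))) := mul_le_mul_of_nonneg_left h2 hH
    have h5 : H * (φ 0 / (2*(H+1))) ≤ φ 0 / 2 := by
      rw [← mul_div_assoc, div_le_div_iff₀ (by positivity) (by norm_num : (0:ℝ) < 2)]
      nlinarith
    linarith
  have hφpos : ∀ x, 0 ≤ x → x ≤ δ → x ≤ 1 → 0 < φ x := by
    intro x hx0 hxδ hx1
    have h := hHolder x ⟨hx0, hx1⟩ 0 (by constructor <;> norm_num)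
    rw [sub_zero, abs_of_nonneg hx0] at h
    have hxη : x ^ η ≤ δ ^ η := Real.rpow_le_rpow hx0 hxδ hη0.le
    have h2 : |φ x - φ 0| ≤ φ 0 / 2 := by
      calc |φ x - φ 0| ≤ H * x ^ η := h
        _ ≤ H * δ ^ η := mul_le_mul_of_nonneg_left hxη hH
        _ ≤ φ 0 / 2 := hδη
    have := abs_le.mp h2
    linarith [this.1]
  -- step gain c and escape count k
  set c : ℝ := 2 ^ γ * (δ * δ ^ γ) with hcdef
  have hc : 0 < c := by
    have := Real.rpow_pos_of_pos hδ0 γ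
    have := Real.rpow_pos_of_pos (by norm_num : (0:ℝ) < 2) γ
    positivity
  set k : ℕ := ⌈1 / (2 * c)⌉₊ with hkdef
  refine ⟨((k : ℝ) + 2) * S, by positivity, ?_⟩
  intro y hy
  set f := lsv γ with hfdef
  set r := returnTime f (Set.Icc (1 / 2 : ℝ) 1) y with hrdef
  set z : ℕ → ℝ := fun i => f^[i] y with hzdef
  have hz01 : ∀ i, z i ∈ Set.Icc (0:ℝ) 1 := by
    intro i
    induction i with
    | zero =>
      show f^[0] y ∈ _
      rw [Function.iterate_zero_apply]
      exact ⟨by linarith [hy.1], hy.2⟩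
    | succ n ih =>
      show f^[n+1] y ∈ _
      rw [Function.iterate_succ_apply']
      exact lsv_mem γ hγ ih
  have hzlt : ∀ i, 1 ≤ i → i < r → z i < 1/2 := by
    intro i hi1 hir
    have : i ∉ {k : ℕ | 1 ≤ k ∧ f^[k] y ∈ Set.Icc (1/2 : ℝ) 1} :=
      Nat.notMem_of_lt_sInf hir
    simp only [Set.mem_setOf_eq, not_and] at this
    have h2 := this hi1
    by_contra hcon
    push_neg at hcon
    exact h2 ⟨hcon, (hz01 i).2⟩
  -- growth in the region [δ, 1/2)
  have hgrow : ∀ m, 1 ≤ m → δ ≤ z m → ∀ d, m + d < r → δ + d * c ≤ z (m + d) := by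
    intro m hm1 hmδ d
    induction d with
    | zero => intro _; simpa using hmδ
    | succ d ih =>
      intro hlt
      have hlt' : m + d < r := by omega
      have hih := ih hlt'
      have hzd : δ ≤ z (m + d) := le_trans (le_add_of_nonneg_right (by positivity)) hih
      have hzd2 : z (m + d) < 1/2 := hzlt _ (by omega) hlt'
      have hzd0 : (0:ℝ) ≤ z (m+d) := (hz01 _).1
      have hstep : z (m + d) + c ≤ z (m + d + 1) := by
        have : z (m + d + 1) = f (z (m + d)) := by
          show f^[m+d+1] y = f (f^[m+d] y)
          rw [Function.iterate_succ_apply']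
        rw [this, hfdef]
        unfold lsv
        rw [if_pos hzd2.le]
        have hmul : δ * δ ^ γ ≤ z (m+d) * (z (m+d)) ^ γ :=
          mul_le_mul hzd (Real.rpow_le_rpow hδ0.le hzd hγ.le)
            (Real.rpow_nonneg hδ0.le _) hzd0
        have h2γ : (0:ℝ) < 2 ^ γ := Real.rpow_pos_of_pos (by norm_num) γ
        have : c ≤ 2 ^ γ * (z (m+d) * (z (m+d)) ^ γ) :=
          mul_le_mul_of_nonneg_left hmul h2γ.le
        nlinarith
      push_cast
      calc δ + (d + 1 : ℝ) * c = (δ + d * c) + c := by ring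
        _ ≤ z (m + d) + c := by linarith
        _ ≤ z (m + d + 1) := hstep
  -- the set of "large" indices before return has at most k+1 elements
  set A : Finset ℕ := (Finset.Ico 1 r).filter (fun i => δ ≤ z i) with hAdef
  have hAcard : A.card ≤ k + 1 := by
    by_cases hAne : A.Nonempty
    · set m := A.min' hAne with hmdef
      have hmA : m ∈ A := A.min'_mem hAne
      rw [hAdef, Finset.mem_filter, Finset.mem_Ico] at hmA
      obtain ⟨⟨hm1, hmr⟩, hmδ⟩ := hmA
      have hsub : A ⊆ Finset.Ico m r := by
        intro i hi
        have hile := A.min'_le i hi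
        rw [hAdef, Finset.mem_filter, Finset.mem_Ico] at hi
        exact Finset.mem_Ico.mpr ⟨hile, hi.1.2⟩
      have hcard1 : A.card ≤ r - m := by
        calc A.card ≤ (Finset.Ico m r).card := Finset.card_le_card hsub
          _ = r - m := Nat.card_Ico m r
      -- bound r - m ≤ k + 1
      rcases Nat.lt_or_ge (r - m) 2 with h2 | h2
      · omega
      · -- r - 1 - m ≥ 1, apply growth with d = r - 1 - m
        have hd : m + (r - 1 - m) < r := by omega
        have hg := hgrow m hm1 hmδ (r - 1 - m) hd
        have hzr : z (m + (r - 1 - m)) < 1/2 := hzlt _ (by omega) hd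
        have hcast : (↑(r - 1 - m) : ℝ) * c ≤ 1/2 := by
          have := le_trans hg hzr.le
          linarith
        have hle : (↑(r - 1 - m) : ℝ) ≤ 1 / (2*c) := by
          rw [le_div_iff₀ (by positivity)]
          linarith [hcast, mul_comm ((r-1-m : ℕ) : ℝ) c]
        have : (r - 1 - m : ℕ) ≤ k := by
          have h1 : (↑(r-1-m) : ℝ) ≤ (k : ℝ) := le_trans hle (Nat.le_ceil _)
          exact_mod_cast h1
        omega
    · rw [Finset.not_nonempty_iff_eq_empty] at hAne
      simp [hAne]
  -- conclude
  intro ℓ hℓ ℓ' hℓ'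
  have hsplit : ergSum f φ ℓ' y - ergSum f φ ℓ y = -(∑ i ∈ Finset.Ico ℓ' ℓ, φ (z i)) := by
    unfold ergSum
    rw [Finset.sum_Ico_eq_sub _ hℓ']
    ring
  rw [hsplit]
  set s := Finset.Ico ℓ' ℓ with hsdef
  set B : Finset ℕ := s.filter (fun i => φ (z i) < 0) with hBdef
  have hBsub : B ⊆ insert 0 A := by
    intro i hi
    rw [hBdef, Finset.mem_filter, hsdef, Finset.mem_Ico] at hi
    obtain ⟨⟨_, hiℓ⟩, hneg⟩ := hi
    rcases Nat.eq_zero_or_pos i with h0 | h1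
    · rw [h0]; exact Finset.mem_insert_self _ _
    · apply Finset.mem_insert_of_mem
      rw [hAdef, Finset.mem_filter, Finset.mem_Ico]
      refine ⟨⟨h1, by omega⟩, ?_⟩
      by_contra hcon
      push_neg at hcon
      exact absurd (hφpos (z i) (hz01 i).1 hcon.le (hz01 i).2) (by linarith)
  have hBcard : B.card ≤ k + 2 := by
    calc B.card ≤ (insert 0 A).card := Finset.card_le_card hBsub
      _ ≤ A.card + 1 := Finset.card_insert_le _ _
      _ ≤ k + 2 := by omega
  have hsum : -(((k:ℝ) + 2) * S) ≤ ∑ i ∈ s, φ (z i) := by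
    rw [← Finset.sum_filter_add_sum_filter_not s (fun i => φ (z i) < 0)]
    have h1 : -(((k:ℝ) + 2) * S) ≤ ∑ i ∈ B, φ (z i) := by
      have := Finset.card_nsmul_le_sum B (fun i => φ (z i)) (-S)
        (fun i _ => hφbd (z i) (hz01 i))
      rw [nsmul_eq_mul] at this
      have h2 : -(((k:ℝ) + 2) * S) ≤ (B.card : ℝ) * (-S) := by
        have : (B.card : ℝ) ≤ (k : ℝ) + 2 := by exact_mod_cast hBcard
        nlinarith
      linarith
    have h2 : (0:ℝ) ≤ ∑ i ∈ s.filter (fun i => ¬ φ (z i) < 0), φ (z i) :=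
      Finset.sum_nonneg fun i hi => by
        rw [Finset.mem_filter] at hi
        linarith [not_lt.mp hi.2]
    linarith
  linarith

lemma ergSum_neg {X : Type*} (f : X → X) (φ : X → ℝ) (n : ℕ) (x : X) :
    ergSum f (fun t => -φ t) n x = -ergSum f φ n x := by
  unfold ergSum
  rw [← Finset.sum_neg_distrib]

theorem stmt14 (γ : ℝ) (hγ0 : 1 / 2 < γ) (hγ1 : γ < 1)
    (φ : ℝ → ℝ) (η H : ℝ) (hη0 : 0 < η) (hη1 : η ≤ 1) (hH : 0 ≤ H)
    (hHolder : ∀ x ∈ Set.Icc (0 : ℝ) 1, ∀ y ∈ Set.Icc (0 : ℝ) 1,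
      |φ x - φ y| ≤ H * |x - y| ^ η)
    (hφ0 : φ 0 ≠ 0) :
    ∃ C : ℝ, 0 < C ∧
      ∀ y ∈ Set.Icc (1 / 2 : ℝ) 1,
        excStar (lsv γ) (Set.Icc (1 / 2 : ℝ) 1) φ y ≤ C := by
  have hγ : 0 < γ := by linarith
  rcases hφ0.lt_or_gt with hneg | hpos
  · -- φ 0 < 0 : apply core to -φ, bound the second sup
    obtain ⟨C, hC, hbd⟩ := core γ hγ (fun t => -φ t) η H hη0 hH
      (by
        intro x hx y hy
        show |(-φ x) - (-φ y)| ≤ _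
        rw [show (-φ x) - (-φ y) = -(φ x - φ y) by ring, abs_neg]
        exact hHolder x hx y hy)
      (by simpa using hneg)
    refine ⟨C, hC, fun y hy => ?_⟩
    refine le_trans (min_le_right _ _) ?_
    apply Finset.sup'_le
    intro ℓ hℓ
    apply Finset.sup'_le
    intro ℓ' hℓ'
    rw [Finset.mem_range] at hℓ hℓ'
    have h := hbd y hy ℓ (by omega) ℓ' (by omega)
    rw [ergSum_neg, ergSum_neg] at h
    linarith
  · -- φ 0 > 0 : bound the first sup
    obtain ⟨C, hC, hbd⟩ := core γ hγ φ η H hη0 hH hHolder hpos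
    refine ⟨C, hC, fun y hy => ?_⟩
    refine le_trans (min_le_left _ _) ?_
    apply Finset.sup'_le
    intro ℓ hℓ
    apply Finset.sup'_le
    intro ℓ' hℓ'
    rw [Finset.mem_range] at hℓ hℓ'
    exact hbd y hy ℓ (by omega) ℓ' (by omega)
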